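/- Suppose a sequence Z(t) ≥ 0 satisfies: Z(t+1) ≤ Z(t) − δ(t) whenever Z(t) ≥ ν_max, and Z(t+1) ≤ ν_max + μ_in always, where |δ(t)| ≤ δ_max and δ_max = max(ν_max, μ_in). Let ε > 0 and w = (ε/δ_max²)·e^{−ε/δ_max}. Then for any Q > 0 and all t: e^{w(Z(t+1)−Q)} − e^{w(Z(t)−Q)} ≤ e^{w(ν_max + μ_in)} − w·e^{w(Z(t)−Q)}·(δ(t) − ε/2). -/

import Mathlib

open Real Set

private lemma exp_quad_nonpos {y : ℝ} (hy : y ≤ 0) :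
    Real.exp y ≤ 1 + y + y ^ 2 / 2 := by
  have hmono : MonotoneOn (fun x : ℝ => Real.exp x - (1 + x + x ^ 2 / 2)) (Iic 0) := by
    apply monotoneOn_of_hasDerivWithinAt_nonneg (convex_Iic 0)
      (f' := fun x => Real.exp x - (1 + x))
    · fun_prop
    · intro x _
      have h1 : HasDerivWithinAt (fun x : ℝ => Real.exp x) (Real.exp x)
          (interior (Iic (0:ℝ))) x := (Real.hasDerivAt_exp x).hasDerivWithinAt
      have h2 : HasDerivWithinAt (fun x : ℝ => 1 + x + x ^ 2 / 2) (0 + 1 + x)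
          (interior (Iic (0:ℝ))) x := by
        have : HasDerivAt (fun x : ℝ => 1 + x + x ^ 2 / 2) (0 + 1 + (2 * x ^ 1 / 2)) x := by
          exact ((hasDerivAt_const x (1:ℝ)).add (hasDerivAt_id x)).add
            (((hasDerivAt_pow 2 x)).div_const 2)
        simpa using this.hasDerivWithinAt
      have h3 := h1.sub h2
      simp only [zero_add] at h3
      exact h3
    · intro x hx
      rw [interior_Iic] at hx
      have := Real.add_one_le_exp x
      linarith
  have h0 : (fun x : ℝ => Real.exp x - (1 + x + x ^ 2 / 2)) 0 = 0 := by simp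
  have := hmono (mem_Iic.2 hy) (mem_Iic.2 le_rfl) hy
  rw [h0] at this
  linarith

private lemma exp_quad_nonneg {y : ℝ} (hy : 0 ≤ y) :
    Real.exp y ≤ 1 + y + y ^ 2 / 2 * Real.exp y := by
  have hmono : MonotoneOn (fun x : ℝ => 1 + x + x ^ 2 / 2 * Real.exp x - Real.exp x)
      (Ici 0) := by
    apply monotoneOn_of_hasDerivWithinAt_nonneg (convex_Ici 0)
      (f' := fun x => 1 + (x + x ^ 2 / 2) * Real.exp x - Real.exp x)
    · fun_prop
    · intro x _
      have h1 : HasDerivAt (fun x : ℝ => 1 + x + x ^ 2 / 2 * Real.exp x - Real.exp x)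
          (0 + 1 + (2 * x ^ 1 / 2 * Real.exp x + x ^ 2 / 2 * Real.exp x) - Real.exp x) x := by
        exact (((hasDerivAt_const x (1:ℝ)).add (hasDerivAt_id x)).add
          (((hasDerivAt_pow 2 x).div_const 2).mul (Real.hasDerivAt_exp x))).sub
          (Real.hasDerivAt_exp x)
      have heq : 0 + 1 + (2 * x ^ 1 / 2 * Real.exp x + x ^ 2 / 2 * Real.exp x) - Real.exp x
          = 1 + (x + x ^ 2 / 2) * Real.exp x - Real.exp x := by ring
      rw [heq] at h1
      exact h1.hasDerivWithinAt
    · intro x hx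
      rw [interior_Ici] at hx
      have hx0 : (0:ℝ) < x := hx
      -- need : 0 ≤ 1 + (x + x^2/2) * exp x - exp x, i.e. (1 - x - x^2/2) * exp x ≤ 1
      by_cases hc : 1 - x - x ^ 2 / 2 ≤ 0
      · nlinarith [Real.exp_pos x, Real.one_le_exp hx0.le]
      · push_neg at hc
        -- then x < 1, and exp x ≤ 1/(1-x)
        have hx1 : x < 1 := by nlinarith
        have hexp : Real.exp x * (1 - x) ≤ 1 := by
          have h1 := Real.add_one_le_exp (-x)
          have hpos := Real.exp_pos x
          have hmul : Real.exp x * Real.exp (-x) = 1 := by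
            rw [← Real.exp_add]; simp
          nlinarith
        nlinarith [Real.exp_pos x]
  have h0 : (fun x : ℝ => 1 + x + x ^ 2 / 2 * Real.exp x - Real.exp x) 0 = 0 := by simp
  have := hmono (mem_Ici.2 le_rfl) (mem_Ici.2 hy) hy
  rw [h0] at this
  linarith

/-- Second-order Taylor bound: `e^y ≤ 1 + y + (y²/2) e^{|y|}`. -/
private lemma exp_quad (y : ℝ) :
    Real.exp y ≤ 1 + y + y ^ 2 / 2 * Real.exp |y| := by
  rcases le_or_gt 0 y with h | h
  · rw [abs_of_nonneg h]; exact exp_quad_nonneg h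
  · rw [abs_of_neg h]
    have h1 := exp_quad_nonpos h.le
    have h2 : (1:ℝ) ≤ Real.exp (-y) := Real.one_le_exp (by linarith)
    nlinarith [sq_nonneg y]

theorem exp_drift_upper (Z δ : ℕ → ℝ) (ν_max μ_in ε Q : ℝ)
    (hν : 0 < ν_max) (hμ : 0 < μ_in) (hε : 0 < ε) (hQ : 0 < Q)
    (hZ : ∀ t, 0 ≤ Z t)
    (hδ : ∀ t, |δ t| ≤ max ν_max μ_in)
    (hdyn1 : ∀ t, ν_max ≤ Z t → Z (t + 1) ≤ Z t - δ t)
    (hdyn2 : ∀ t, Z (t + 1) ≤ ν_max + μ_in ∨ ν_max ≤ Z t) :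
    ∀ t,
      let δ_max := max ν_max μ_in
      let w := (ε / δ_max ^ 2) * Real.exp (-ε / δ_max)
      Real.exp (w * (Z (t + 1) - Q)) - Real.exp (w * (Z t - Q)) ≤
        Real.exp (w * (ν_max + μ_in)) -
          w * Real.exp (w * (Z t - Q)) * (δ t - ε / 2) := by
  intro t δ_max w
  have hdm : 0 < δ_max := lt_max_of_lt_left hν
  have hs : 0 < ε / δ_max := div_pos hε hdm
  have hw : 0 < w := mul_pos (div_pos hε (by positivity)) (Real.exp_pos _)
  have hwdm : w * δ_max = (ε / δ_max) * Real.exp (-(ε / δ_max)) := by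
    show ε / δ_max ^ 2 * Real.exp (-ε / δ_max) * δ_max = _
    rw [neg_div]
    field_simp
  have hwdm2 : w * δ_max ^ 2 = ε * Real.exp (-(ε / δ_max)) := by
    show ε / δ_max ^ 2 * Real.exp (-ε / δ_max) * δ_max ^ 2 = _
    rw [neg_div]
    field_simp
  -- w * δ_max ≤ 1 and exp (w δ_max) ≤ exp (ε/δ_max)
  have hwdm_le : w * δ_max ≤ ε / δ_max := by
    rw [hwdm]
    have h1 : Real.exp (-(ε / δ_max)) ≤ 1 := Real.exp_le_one_iff.2 (by linarith)
    nlinarith [Real.exp_pos (-(ε/δ_max))]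
  have hwdm_le1 : w * δ_max ≤ 1 := by
    rw [hwdm]
    have h1 := Real.add_one_le_exp (ε / δ_max)
    have h2 : Real.exp (-(ε/δ_max)) * Real.exp (ε/δ_max) = 1 := by
      rw [← Real.exp_add]; simp
    nlinarith [Real.exp_pos (-(ε/δ_max))]
  -- the key remainder bound
  have hkey : w ^ 2 * δ_max ^ 2 / 2 * Real.exp (w * δ_max) ≤ w * ε / 2 := by
    have h1 : Real.exp (w * δ_max) ≤ Real.exp (ε / δ_max) := Real.exp_le_exp.2 hwdm_le
    have h2 : w * δ_max ^ 2 * Real.exp (ε / δ_max) = ε := by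
      rw [hwdm2, mul_assoc, ← Real.exp_add]; simp
    have h3 : w * δ_max ^ 2 * Real.exp (w * δ_max) ≤ ε := by
      calc w * δ_max ^ 2 * Real.exp (w * δ_max)
          ≤ w * δ_max ^ 2 * Real.exp (ε / δ_max) := by
            apply mul_le_mul_of_nonneg_left h1 (by positivity)
        _ = ε := h2
    nlinarith [mul_le_mul_of_nonneg_left h3 (le_of_lt (half_pos hw))]
  by_cases hcase : ν_max ≤ Z t
  · -- drift case
    have hup : Z (t + 1) ≤ Z t - δ t := hdyn1 t hcase
    have hEpos : 0 < Real.exp (w * (Z t - Q)) := Real.exp_pos _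
    have h1 : Real.exp (w * (Z (t + 1) - Q)) ≤
        Real.exp (w * (Z t - Q)) * Real.exp (-(w * δ t)) := by
      rw [← Real.exp_add]
      apply Real.exp_le_exp.2
      nlinarith
    have htay : Real.exp (-(w * δ t)) ≤ 1 - w * δ t + w * ε / 2 := by
      have h2 := exp_quad (-(w * δ t))
      have h3 : |(-(w * δ t))| ≤ w * δ_max := by
        rw [abs_neg, abs_mul, abs_of_pos hw]
        exact mul_le_mul_of_nonneg_left (hδ t) hw.le
      have h4 : Real.exp |(-(w * δ t))| ≤ Real.exp (w * δ_max) := Real.exp_le_exp.2 h3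
      have h5 : (-(w * δ t)) ^ 2 ≤ (w * δ_max) ^ 2 := by
        rw [← sq_abs]
        exact pow_le_pow_left₀ (abs_nonneg _) h3 2
      have h6 : (-(w * δ t)) ^ 2 / 2 * Real.exp |(-(w * δ t))| ≤
          (w * δ_max) ^ 2 / 2 * Real.exp (w * δ_max) := by
        apply mul_le_mul (by linarith) h4 (Real.exp_pos _).le (by positivity)
      have h7 : (w * δ_max) ^ 2 / 2 * Real.exp (w * δ_max) ≤ w * ε / 2 := by
        calc (w * δ_max) ^ 2 / 2 * Real.exp (w * δ_max)
            = w ^ 2 * δ_max ^ 2 / 2 * Real.exp (w * δ_max) := by ring_nf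
          _ ≤ w * ε / 2 := hkey
      calc Real.exp (-(w * δ t)) ≤ 1 + (-(w * δ t)) +
            (-(w * δ t)) ^ 2 / 2 * Real.exp |(-(w * δ t))| := h2
        _ ≤ 1 + (-(w * δ t)) + w * ε / 2 := by linarith
        _ = 1 - w * δ t + w * ε / 2 := by ring
    have hexpQ : 0 < Real.exp (w * (ν_max + μ_in)) := Real.exp_pos _
    calc Real.exp (w * (Z (t + 1) - Q)) - Real.exp (w * (Z t - Q))
        ≤ Real.exp (w * (Z t - Q)) * Real.exp (-(w * δ t)) -
          Real.exp (w * (Z t - Q)) := by linarith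
      _ ≤ Real.exp (w * (Z t - Q)) * (1 - w * δ t + w * ε / 2) -
          Real.exp (w * (Z t - Q)) := by nlinarith
      _ = - (w * Real.exp (w * (Z t - Q)) * (δ t - ε / 2)) := by ring
      _ ≤ Real.exp (w * (ν_max + μ_in)) -
          w * Real.exp (w * (Z t - Q)) * (δ t - ε / 2) := by linarith
  · -- bounded case
    have hup : Z (t + 1) ≤ ν_max + μ_in := (hdyn2 t).resolve_right hcase
    have h1 : Real.exp (w * (Z (t + 1) - Q)) ≤ Real.exp (w * (ν_max + μ_in)) := by
      apply Real.exp_le_exp.2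
      nlinarith
    -- need : - exp(w(Zt-Q)) ≤ - w exp(w(Zt-Q))(δ t - ε/2), i.e. w(δ t - ε/2) ≤ 1
    have hEpos : 0 < Real.exp (w * (Z t - Q)) := Real.exp_pos _
    have hδle : δ t ≤ δ_max := (abs_le.1 (hδ t)).2
    have h2 : w * (δ t - ε / 2) ≤ 1 := by
      have : w * δ t ≤ w * δ_max := mul_le_mul_of_nonneg_left hδle hw.le
      nlinarith
    nlinarith
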